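/- For every admissible state (h, v1, v2, P11, P12, P22) with h > 0 and D = P11 P22 − P12^2 > 0, and for arbitrary real parameters α ≥ 0, C_f, g, b_x, b_y, the entropy variable vector V satisfies V · S = 4 α |v|^3, where |v| = sqrt(v1^2 + v2^2) and S is the full SSW source vector S = (0, −g h b_x − C_f |v| v1, −g h b_y − C_f |v| v2, −α |v|^3 P11 − g h v1 b_x − C_f |v| v1^2, −α |v|^3 P12 − (1/2) g h v2 b_x − (1/2) g h v1 b_y − C_f |v| v1 v2, −α |v|^3 P22 − g h v2 b_y − C_f |v| v2^2). In particular, the bottom topography and Chezy friction terms make no contribution to the entropy production. -/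

import Mathlib

open Matrix

/-- The entropy variable vector of the shear shallow water model, as a function of the
primitive state `(h, v1, v2, P11, P12, P22)`. -/
noncomputable def entVar (h v1 v2 P11 P12 P22 : ℝ) : Fin 6 → ℝ :=
  ![4 - Real.log ((P11 * P22 - P12 ^ 2) / h ^ 2)
      - (P11 * v2 ^ 2 + P22 * v1 ^ 2 - 2 * P12 * v1 * v2) / (P11 * P22 - P12 ^ 2),
    2 * (P22 * v1 - P12 * v2) / (P11 * P22 - P12 ^ 2),
    2 * (P11 * v2 - P12 * v1) / (P11 * P22 - P12 ^ 2),
    -2 * P22 / (P11 * P22 - P12 ^ 2),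
    4 * P12 / (P11 * P22 - P12 ^ 2),
    -2 * P11 / (P11 * P22 - P12 ^ 2)]

theorem myCons_val_five {α : Type*} (a b c d e f : α) : ![a,b,c,d,e,f] 5 = f := rfl

/-- The contribution of the full SSW source term to the entropy production is
`V · S = 4 α |v|³`: the bottom topography and Chezy friction terms contribute nothing. -/
theorem ssw_entVar_dot_source (h v1 v2 P11 P12 P22 α Cf g bx by' : ℝ)
    (hh : 0 < h) (hD : 0 < P11 * P22 - P12 ^ 2) (hα : 0 ≤ α) :
    entVar h v1 v2 P11 P12 P22 ⬝ᵥ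
      ![0,
        -(g * h * bx) - Cf * Real.sqrt (v1 ^ 2 + v2 ^ 2) * v1,
        -(g * h * by') - Cf * Real.sqrt (v1 ^ 2 + v2 ^ 2) * v2,
        -(α * Real.sqrt (v1 ^ 2 + v2 ^ 2) ^ 3 * P11) - g * h * v1 * bx
          - Cf * Real.sqrt (v1 ^ 2 + v2 ^ 2) * v1 ^ 2,
        -(α * Real.sqrt (v1 ^ 2 + v2 ^ 2) ^ 3 * P12) - 1 / 2 * g * h * v2 * bx
          - 1 / 2 * g * h * v1 * by' - Cf * Real.sqrt (v1 ^ 2 + v2 ^ 2) * v1 * v2,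
        -(α * Real.sqrt (v1 ^ 2 + v2 ^ 2) ^ 3 * P22) - g * h * v2 * by'
          - Cf * Real.sqrt (v1 ^ 2 + v2 ^ 2) * v2 ^ 2]
      = 4 * α * Real.sqrt (v1 ^ 2 + v2 ^ 2) ^ 3 := by
  have hD' : P11 * P22 - P12 ^ 2 ≠ 0 := ne_of_gt hD
  set q := Real.sqrt (v1 ^ 2 + v2 ^ 2) with hq
  simp [entVar, dotProduct, Fin.sum_univ_six, myCons_val_five]
  field_simp
  have hD'' : P22 * P11 - P12 ^ 2 ≠ 0 := by rw [mul_comm]; exact hD'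
  ring_nf
  field_simp
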